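/- Let k ≥ 2 be an integer and let q : ℝ → ℝ be defined by q(ζ) = ((k+1)/2)^{1/(k−1)}·(sech((k−1)ζ/2))^{2/(k−1)}. Then q is integrable on ℝ and the Melnikov integral M = −∫_{−∞}^{∞} q(ζ)·(∫_{−∞}^{ζ} q(s) ds) dζ satisfies M = −2·(∫_{0}^{∞} q(ζ) dζ)². In particular M < 0, so M ≠ 0, and hence the homoclinic orbit of the ε = 0 layer problem breaks for ε > 0. -/

import Mathlib

open MeasureTheory Set Filter Topology

/-- exp(-|x|) is integrable on ℝ. -/
lemma grspe_aux_integrable_exp_neg_abs : Integrable (fun x : ℝ => Real.exp (-|x|)) := by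
  have h1 : IntegrableOn (fun x : ℝ => Real.exp (-|x|)) (Iic 0) := by
    refine (integrableOn_exp_Iic 0).congr_fun ?_ measurableSet_Iic
    intro x hx
    simp [abs_of_nonpos (mem_Iic.1 hx)]
  have h2 : IntegrableOn (fun x : ℝ => Real.exp (-|x|)) (Ioi 0) := by
    refine (exp_neg_integrableOn_Ioi 0 one_pos).congr_fun ?_ measurableSet_Ioi
    intro x hx
    simp [abs_of_pos (mem_Ioi.1 hx)]
  have := h1.union h2
  rwa [Set.Iic_union_Ioi, integrableOn_univ] at this

/-- The Melnikov integral M = −∫ q·(∫_{−∞}^ζ q) dζ along the gKdV soliton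
equals −2(∫₀^∞ q)², hence is negative and nonzero: the homoclinic orbit of
the ε = 0 layer problem breaks for ε > 0. -/
theorem grspe_melnikov_integral_nonzero (k : ℕ) (hk : 2 ≤ k) (q : ℝ → ℝ)
    (hq : ∀ ζ : ℝ, q ζ = (((k : ℝ) + 1) / 2) ^ ((1 : ℝ) / ((k : ℝ) - 1)) *
        (1 / Real.cosh (((k : ℝ) - 1) / 2 * ζ)) ^ ((2 : ℝ) / ((k : ℝ) - 1))) :
    Integrable q ∧
    (-∫ ζ : ℝ, q ζ * ∫ s in Set.Iic ζ, q s) =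
      -2 * (∫ ζ in Set.Ioi (0 : ℝ), q ζ) ^ 2 ∧
    (-∫ ζ : ℝ, q ζ * ∫ s in Set.Iic ζ, q s) < 0 := by
  have hk1 : (1 : ℝ) ≤ (k : ℝ) - 1 := by
    have : (2 : ℝ) ≤ (k : ℝ) := by exact_mod_cast hk
    linarith
  have hkm1 : (0 : ℝ) < (k : ℝ) - 1 := lt_of_lt_of_le one_pos hk1
  set C : ℝ := (((k : ℝ) + 1) / 2) ^ ((1 : ℝ) / ((k : ℝ) - 1)) with hCdef
  set a : ℝ := ((k : ℝ) - 1) / 2 with hadef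
  set p : ℝ := (2 : ℝ) / ((k : ℝ) - 1) with hpdef
  have hapos : 0 < a := by positivity
  have hppos : 0 < p := by positivity
  have hCpos : 0 < C := by
    apply Real.rpow_pos_of_pos
    have : (0 : ℝ) < (k : ℝ) + 1 := by positivity
    positivity
  have hap : a * p = 1 := by
    rw [hadef, hpdef, div_mul_div_comm, mul_comm ((k:ℝ) - 1) 2, div_self (mul_pos two_pos hkm1).ne']
  -- positivity of q
  have hqpos : ∀ ζ : ℝ, 0 < q ζ := by
    intro ζ
    rw [hq ζ]
    have h1 : 0 < 1 / Real.cosh (a * ζ) := by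
      have := Real.cosh_pos (a * ζ); positivity
    exact mul_pos hCpos (Real.rpow_pos_of_pos h1 _)
  -- continuity of q
  have hqcont : Continuous q := by
    have : Continuous fun ζ : ℝ => C * (1 / Real.cosh (a * ζ)) ^ p := by
      apply Continuous.mul continuous_const
      apply Continuous.rpow_const
      · exact Continuous.div continuous_const
          (Real.continuous_cosh.comp (continuous_const.mul continuous_id))
          (fun x => (Real.cosh_pos _).ne')
      · exact fun x => Or.inr hppos.le
    exact this.congr fun ζ => (hq ζ).symm
  -- integrability of q
  have hqbound : ∀ ζ : ℝ, q ζ ≤ C * 2 ^ p * Real.exp (-|ζ|) := by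
    intro ζ
    rw [hq ζ]
    have hcosh : Real.exp |a * ζ| / 2 ≤ Real.cosh (a * ζ) := by
      rw [Real.cosh_eq]
      rcases abs_cases (a * ζ) with ⟨h, _⟩ | ⟨h, _⟩ <;> rw [h] <;>
        [skip; skip] <;> nlinarith [Real.exp_pos (a * ζ), Real.exp_pos (-(a * ζ))]
    have h1 : 1 / Real.cosh (a * ζ) ≤ 2 * Real.exp (-|a * ζ|) := by
      have h := one_div_le_one_div_of_le (by positivity) hcosh
      calc 1 / Real.cosh (a * ζ) ≤ 1 / (Real.exp |a * ζ| / 2) := h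
        _ = 2 * Real.exp (-|a * ζ|) := by
            rw [Real.exp_neg]; field_simp
    have h2 : (1 / Real.cosh (a * ζ)) ^ p ≤ (2 * Real.exp (-|a * ζ|)) ^ p := by
      apply Real.rpow_le_rpow (by positivity) h1 hppos.le
    have h3 : (2 * Real.exp (-|a * ζ|)) ^ p = 2 ^ p * Real.exp (-|ζ|) := by
      rw [Real.mul_rpow (by norm_num) (Real.exp_pos _).le, ← Real.exp_mul]
      congr 1
      rw [abs_mul, abs_of_pos hapos]
      rw [neg_mul]
      congr 1
      rw [mul_comm a |ζ|, mul_assoc, hap, mul_one]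
    calc C * (1 / Real.cosh (a * ζ)) ^ p ≤ C * (2 * Real.exp (-|a * ζ|)) ^ p :=
          mul_le_mul_of_nonneg_left h2 hCpos.le
      _ = C * 2 ^ p * Real.exp (-|ζ|) := by rw [h3, mul_assoc]
  have hqint : Integrable q := by
    refine (grspe_aux_integrable_exp_neg_abs.const_mul (C * 2 ^ p)).mono'
      hqcont.aestronglyMeasurable ?_
    filter_upwards with ζ
    rw [Real.norm_eq_abs, abs_of_pos (hqpos ζ)]
    exact hqbound ζ
  -- the primitive F
  set F : ℝ → ℝ := fun ζ => ∫ s in Iic ζ, q s with hFdef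
  have hFeq : ∀ u : ℝ, F u = F 0 + ∫ x in (0:ℝ)..u, q x := by
    intro u
    have := intervalIntegral.integral_Iic_sub_Iic hqint.integrableOn hqint.integrableOn
      (a := 0) (b := u)
    rw [← this]; ring
  have hFd : ∀ ζ : ℝ, HasDerivAt F (q ζ) ζ := by
    intro ζ
    have h : HasDerivAt (fun u => F 0 + ∫ x in (0:ℝ)..u, q x) (q ζ) ζ := by
      refine HasDerivAt.const_add _ ?_
      exact intervalIntegral.integral_hasDerivAt_right (hqint.intervalIntegrable)
        (hqcont.stronglyMeasurable.stronglyMeasurableAtFilter) hqcont.continuousAt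
    exact h.congr_of_eventuallyEq (Filter.Eventually.of_forall fun u => hFeq u)
  have hFcont : Continuous F := by
    have : Differentiable ℝ F := fun ζ => (hFd ζ).differentiableAt
    exact this.continuous
  set I : ℝ := ∫ ζ : ℝ, q ζ with hIdef
  set J : ℝ := ∫ ζ in Ioi (0:ℝ), q ζ with hJdef
  have hsplit : (∫ ζ in Iic (0:ℝ), q ζ) + J = I := by
    rw [hJdef, hIdef]
    exact intervalIntegral.integral_Iic_add_Ioi hqint.integrableOn hqint.integrableOn
  -- symmetry: ∫ Iic 0 = ∫ Ioi 0
  have hqeven : ∀ ζ : ℝ, q (-ζ) = q ζ := by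
    intro ζ
    rw [hq ζ, hq (-ζ)]
    have : ((k : ℝ) - 1) / 2 * -ζ = -(((k : ℝ) - 1) / 2 * ζ) := by ring
    rw [this, Real.cosh_neg]
  have hsym : (∫ ζ in Iic (0:ℝ), q ζ) = J := by
    have := integral_comp_neg_Iic (0 : ℝ) q
    rw [neg_zero] at this
    rw [hJdef, ← this]
    exact integral_congr_ae (Filter.Eventually.of_forall fun ζ => (hqeven ζ).symm)
  have hI2J : I = 2 * J := by rw [← hsplit, hsym]; ring
  -- limits of F
  have hFtop : Tendsto F atTop (𝓝 I) := by
    have h1 : Tendsto (fun u => ∫ x in (0:ℝ)..u, q x) atTop (𝓝 J) :=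
      intervalIntegral_tendsto_integral_Ioi 0 hqint.integrableOn tendsto_id
    have h2 : Tendsto (fun u => F 0 + ∫ x in (0:ℝ)..u, q x) atTop (𝓝 (F 0 + J)) :=
      h1.const_add (F 0)
    have hF0 : F 0 = ∫ ζ in Iic (0:ℝ), q ζ := rfl
    have : F 0 + J = I := by rw [hF0, hsplit]
    rw [← this]
    exact h2.congr fun u => (hFeq u).symm
  have hFbot : Tendsto F atBot (𝓝 0) := by
    have h1 : Tendsto (fun u => ∫ x in u..(0:ℝ), q x) atBot (𝓝 (∫ ζ in Iic (0:ℝ), q ζ)) :=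
      intervalIntegral_tendsto_integral_Iic 0 hqint.integrableOn tendsto_id
    have h2 : Tendsto (fun u => F 0 + ∫ x in (0:ℝ)..u, q x) atBot (𝓝 (F 0 - F 0)) := by
      have : Tendsto (fun u => ∫ x in (0:ℝ)..u, q x) atBot (𝓝 (-F 0)) := by
        have := h1.neg
        simp only [← intervalIntegral.integral_symm] at this
        exact this
      simpa [sub_eq_add_neg] using this.const_add (F 0)
    rw [sub_self] at h2
    exact h2.congr fun u => (hFeq u).symm
  -- bounds on F
  have hFnonneg : ∀ ζ : ℝ, 0 ≤ F ζ :=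
    fun ζ => setIntegral_nonneg measurableSet_Iic fun x _ => (hqpos x).le
  have hFle : ∀ ζ : ℝ, F ζ ≤ I := by
    intro ζ
    have h := intervalIntegral.integral_Iic_add_Ioi (b := ζ) hqint.integrableOn hqint.integrableOn
    have h2 : 0 ≤ ∫ s in Ioi ζ, q s :=
      setIntegral_nonneg measurableSet_Ioi fun x _ => (hqpos x).le
    rw [hIdef, ← h]
    linarith [h2]
  -- integrability of q·F
  have hqFint : Integrable (fun ζ => q ζ * F ζ) := by
    refine (hqint.const_mul I).mono' (hqcont.mul hFcont).aestronglyMeasurable ?_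
    filter_upwards with ζ
    rw [Real.norm_eq_abs, abs_of_nonneg (mul_nonneg (hqpos ζ).le (hFnonneg ζ))]
    calc q ζ * F ζ ≤ q ζ * I := mul_le_mul_of_nonneg_left (hFle ζ) (hqpos ζ).le
      _ = I * q ζ := mul_comm _ _
  -- the function G = F²/2
  set G : ℝ → ℝ := fun ζ => F ζ ^ 2 / 2 with hGdef
  have hGd : ∀ ζ : ℝ, HasDerivAt G (q ζ * F ζ) ζ := by
    intro ζ
    have h := ((hFd ζ).pow 2).div_const 2
    refine h.congr_deriv ?_
    rw [show (2:ℕ) - 1 = 1 from rfl]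
    push_cast
    ring
  have hGtop : Tendsto G atTop (𝓝 (I ^ 2 / 2)) := ((hFtop.pow 2).div_const 2)
  have hGbot : Tendsto G atBot (𝓝 0) := by
    have := (hFbot.pow 2).div_const 2
    simpa using this
  -- compute the integral
  have hIic0 : ∫ ζ in Iic (0:ℝ), q ζ * F ζ = G 0 - 0 :=
    integral_Iic_of_hasDerivAt_of_tendsto' (fun x _ => hGd x)
      hqFint.integrableOn hGbot
  have hIoi0 : ∫ ζ in Ioi (0:ℝ), q ζ * F ζ = I ^ 2 / 2 - G 0 :=
    integral_Ioi_of_hasDerivAt_of_tendsto' (fun x _ => hGd x)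
      hqFint.integrableOn hGtop
  have hmain : ∫ ζ : ℝ, q ζ * F ζ = I ^ 2 / 2 := by
    rw [← intervalIntegral.integral_Iic_add_Ioi (b := (0:ℝ)) hqFint.integrableOn hqFint.integrableOn,
      hIic0, hIoi0]
    ring
  have hM : (-∫ ζ : ℝ, q ζ * ∫ s in Set.Iic ζ, q s) = -2 * J ^ 2 := by
    have : (∫ ζ : ℝ, q ζ * ∫ s in Set.Iic ζ, q s) = ∫ ζ : ℝ, q ζ * F ζ := rfl
    rw [this, hmain, hI2J]
    ring
  -- positivity of J
  have hJpos : 0 < J := by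
    rw [hJdef]
    rw [setIntegral_pos_iff_support_of_nonneg_ae
      (Filter.Eventually.of_forall fun x => (hqpos x).le) hqint.integrableOn]
    have hsup : Function.support q ∩ Ioi (0:ℝ) = Ioi (0:ℝ) := by
      apply inter_eq_self_of_subset_right
      intro x _
      exact (hqpos x).ne'
    rw [hsup]
    simp [Real.volume_Ioi]
  refine ⟨hqint, hM, ?_⟩
  rw [hM]
  nlinarith [hJpos]
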